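/- Unisolvency of the $n$-dimensional Adini-type element: if $v \in \mathcal{P}_A$ satisfies $v(a) = 0$, $\partial_j v(a) = 0$ for all $1 \le j \le n$, and $\partial_j^2 v(a) = 0$ for all $1 \le j \le n$, at every vertex $a \in \{-1,1\}^n$ of the unit cube $[-1,1]^n$, then $v = 0$. -/

import Mathlib

open MvPolynomial

/-- `Q1`: span of the multilinear monomials (each exponent at most 1). -/
noncomputable def Q1 (n : ℕ) : Submodule ℝ (MvPolynomial (Fin n) ℝ) :=
  Submodule.span ℝ {p | ∃ α : Fin n →₀ ℕ, (∀ i, α i ≤ 1) ∧ p = monomial α (1 : ℝ)}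

/-- `A · B`: the span of products of elements of `A` and `B`. -/
noncomputable def prodSpan {n : ℕ} (A B : Submodule ℝ (MvPolynomial (Fin n) ℝ)) :
    Submodule ℝ (MvPolynomial (Fin n) ℝ) :=
  Submodule.span ℝ {p | ∃ a ∈ A, ∃ b ∈ B, p = a * b}

/-- Adini-type shape function space `P_A = Q1 · span{1, x_i^2, x_i^4}`. -/
noncomputable def PA (n : ℕ) : Submodule ℝ (MvPolynomial (Fin n) ℝ) :=
  prodSpan (Q1 n)
    (Submodule.span ℝ ({1} ∪ {p | ∃ i : Fin n, p = X i ^ 2 ∨ p = X i ^ 4}))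

namespace AdiniAux

variable {n : ℕ}

lemma mem_Q1_coeff {q : MvPolynomial (Fin n) ℝ} (hq : q ∈ Q1 n) :
    ∀ α ∈ q.support, ∀ i, α i ≤ 1 := by
  induction hq using Submodule.span_induction with
  | mem x hx =>
      obtain ⟨α, hα, rfl⟩ := hx
      intro β hβ i
      rw [support_monomial] at hβ
      simp only [one_ne_zero, if_false, Finset.mem_singleton] at hβ
      subst hβ; exact hα i
  | zero => simp
  | add x y hx hy ihx ihy =>
      intro β hβ i
      rcases Finset.mem_union.mp (MvPolynomial.support_add hβ) with h | h
      · exact ihx β h i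
      · exact ihy β h i
  | smul a x hx ih =>
      intro β hβ i
      exact ih β (MvPolynomial.support_smul hβ) i

lemma Q1_pderiv_pderiv {q : MvPolynomial (Fin n) ℝ} (j : Fin n) (hq : q ∈ Q1 n) :
    pderiv j (pderiv j q) = 0 := by
  induction hq using Submodule.span_induction with
  | mem x hx =>
      obtain ⟨α, hα, rfl⟩ := hx
      rw [pderiv_monomial, pderiv_monomial]
      have h1 : (α - Finsupp.single j 1 : Fin n →₀ ℕ) j = 0 := by
        rw [Finsupp.tsub_apply, Finsupp.single_eq_same]
        exact Nat.sub_eq_zero_of_le (hα j)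
      simp [h1]
  | zero => simp
  | add x y hx hy ihx ihy => rw [map_add, map_add, ihx, ihy, add_zero]
  | smul a x hx ih => rw [Derivation.map_smul, Derivation.map_smul, ih, smul_zero]

lemma Q1_X_mul_pderiv {q : MvPolynomial (Fin n) ℝ} (j : Fin n) (hq : q ∈ Q1 n) :
    X j * pderiv j q ∈ Q1 n := by
  induction hq using Submodule.span_induction with
  | mem x hx =>
      obtain ⟨α, hα, rfl⟩ := hx
      rw [pderiv_monomial]
      rcases Nat.le_one_iff_eq_zero_or_eq_one.mp (hα j) with h | h
      · rw [h]; simp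
      · have hXm : (X j : MvPolynomial (Fin n) ℝ) = monomial (Finsupp.single j 1) 1 := by
          rw [← X_pow_eq_monomial, pow_one]
        have hexp : Finsupp.single j 1 + (α - Finsupp.single j 1) = α := by
          ext i
          rw [Finsupp.add_apply, Finsupp.tsub_apply, Finsupp.single_apply]
          by_cases hij : j = i
          · subst hij; simp [h]
          · simp [hij]
        rw [hXm, monomial_mul, hexp, h]
        exact Submodule.subset_span ⟨α, hα, by norm_num⟩
  | zero => simp
  | add x y hx hy ihx ihy =>
      rw [map_add, mul_add]; exact Submodule.add_mem _ ihx ihy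
  | smul a x hx ih =>
      rw [Derivation.map_smul, mul_smul_comm]; exact Submodule.smul_mem _ _ ih

lemma ml_vanish (q : MvPolynomial (Fin n) ℝ)
    (hml : ∀ α ∈ q.support, ∀ i, α i ≤ 1)
    (h0 : ∀ a : Fin n → ℝ, (∀ i, a i = 1 ∨ a i = -1) → eval a q = 0) : q = 0 := by
  ext α
  rw [coeff_zero]
  by_cases hα : α ∈ q.support
  case neg => exact notMem_support_iff.mp hα
  set pt : (Fin n → Bool) → (Fin n → ℝ) := fun σ i => if σ i then 1 else -1 with hpt
  have hptv : ∀ σ i, pt σ i = 1 ∨ pt σ i = -1 := by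
    intro σ i; by_cases h : σ i <;> simp [hpt, h]
  have key : ∀ β : Fin n →₀ ℕ, β ∈ q.support →
      (∑ σ : Fin n → Bool, ∏ i, pt σ i ^ (α i + β i)) = if β = α then (2:ℝ)^n else 0 := by
    intro β hβ
    rw [← Fintype.prod_sum fun i (b : Bool) => (if b then (1:ℝ) else -1) ^ (α i + β i)]
    by_cases hβα : β = α
    · subst hβα
      rw [if_pos rfl]
      have : ∀ i : Fin n, (∑ b : Bool, (if b then (1:ℝ) else -1) ^ (β i + β i)) = 2 := by
        intro i
        rw [Fintype.sum_bool]
        rw [if_pos rfl, if_neg (by simp), one_pow, Even.neg_one_pow ⟨β i, rfl⟩]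
        norm_num
      rw [Finset.prod_congr rfl fun i _ => this i, Finset.prod_const, Finset.card_univ,
        Fintype.card_fin]
    · rw [if_neg hβα]
      obtain ⟨i, hi⟩ : ∃ i, β i ≠ α i := by
        by_contra hc
        push_neg at hc
        exact hβα (Finsupp.ext hc)
      apply Finset.prod_eq_zero (Finset.mem_univ i)
      have h1 : α i + β i = 1 := by
        have := hml α hα i; have := hml β hβ i; omega
      rw [Fintype.sum_bool, h1]
      norm_num
  have hS : ∑ σ : Fin n → Bool,
      (∏ i, pt σ i ^ α i) * eval (pt σ) q = 0 := by
    apply Finset.sum_eq_zero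
    intro σ _
    rw [h0 (pt σ) (hptv σ), mul_zero]
  have hS2 : ∑ σ : Fin n → Bool, (∏ i, pt σ i ^ α i) * eval (pt σ) q
      = coeff α q * 2 ^ n := by
    have step1 : ∀ σ : Fin n → Bool, (∏ i, pt σ i ^ α i) * eval (pt σ) q
        = ∑ β ∈ q.support, coeff β q * ∏ i, pt σ i ^ (α i + β i) := by
      intro σ
      rw [eval_eq', Finset.mul_sum]
      refine Finset.sum_congr rfl fun β _ => ?_
      rw [show ∀ x y z : ℝ, x * (y * z) = y * (x * z) from fun x y z => by ring,
        ← Finset.prod_mul_distrib]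
      congr 1
      exact Finset.prod_congr rfl fun i _ => (pow_add _ _ _).symm
    calc ∑ σ : Fin n → Bool, (∏ i, pt σ i ^ α i) * eval (pt σ) q
        = ∑ σ : Fin n → Bool, ∑ β ∈ q.support, coeff β q * ∏ i, pt σ i ^ (α i + β i) :=
          Finset.sum_congr rfl fun σ _ => step1 σ
      _ = ∑ β ∈ q.support, ∑ σ : Fin n → Bool, coeff β q * ∏ i, pt σ i ^ (α i + β i) :=
          Finset.sum_comm
      _ = ∑ β ∈ q.support, coeff β q * (if β = α then (2:ℝ)^n else 0) := by
          refine Finset.sum_congr rfl fun β hβ => ?_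
          rw [← Finset.mul_sum, key β hβ]
      _ = coeff α q * 2 ^ n := by
          rw [Finset.sum_congr rfl (fun β _ => by rw [mul_ite, mul_zero]),
            Finset.sum_ite_eq' q.support α _]
          rw [if_pos hα]
  have hfin := hS2.symm.trans hS
  have h2n : (2:ℝ)^n ≠ 0 := by positivity
  exact (mul_eq_zero.mp hfin).resolve_right h2n

/-- Representation predicate for elements of `PA`. -/
def IsRep (n : ℕ) (v : MvPolynomial (Fin n) ℝ) : Prop :=
  ∃ q : MvPolynomial (Fin n) ℝ, ∃ p r : Fin n → MvPolynomial (Fin n) ℝ,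
    q ∈ Q1 n ∧ (∀ j, p j ∈ Q1 n) ∧ (∀ j, r j ∈ Q1 n) ∧
    v = q + ∑ j : Fin n, (X j ^ 2 * p j + X j ^ 4 * r j)

lemma isRep_zero : IsRep n 0 :=
  ⟨0, 0, 0, Submodule.zero_mem _, fun _ => Submodule.zero_mem _,
    fun _ => Submodule.zero_mem _, by simp⟩

lemma isRep_add {v w : MvPolynomial (Fin n) ℝ} (hv : IsRep n v) (hw : IsRep n w) :
    IsRep n (v + w) := by
  obtain ⟨q1, p1, r1, hq1, hp1, hr1, rfl⟩ := hv
  obtain ⟨q2, p2, r2, hq2, hp2, hr2, rfl⟩ := hw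
  refine ⟨q1 + q2, p1 + p2, r1 + r2, Submodule.add_mem _ hq1 hq2,
    fun j => Submodule.add_mem _ (hp1 j) (hp2 j),
    fun j => Submodule.add_mem _ (hr1 j) (hr2 j), ?_⟩
  have : ∑ j : Fin n, (X j ^ 2 * (p1 + p2) j + X j ^ 4 * (r1 + r2) j)
      = ∑ j : Fin n, (X j ^ 2 * p1 j + X j ^ 4 * r1 j)
        + ∑ j : Fin n, (X j ^ 2 * p2 j + X j ^ 4 * r2 j) := by
    rw [← Finset.sum_add_distrib]
    exact Finset.sum_congr rfl fun j _ => by simp only [Pi.add_apply]; ring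
  rw [this]
  abel

lemma isRep_smul {v : MvPolynomial (Fin n) ℝ} (c : ℝ) (hv : IsRep n v) :
    IsRep n (c • v) := by
  obtain ⟨q, p, r, hq, hp, hr, rfl⟩ := hv
  refine ⟨c • q, c • p, c • r, Submodule.smul_mem _ _ hq,
    fun j => Submodule.smul_mem _ _ (hp j), fun j => Submodule.smul_mem _ _ (hr j), ?_⟩
  have : ∑ j : Fin n, (X j ^ 2 * (c • p) j + X j ^ 4 * (c • r) j)
      = ∑ j : Fin n, c • (X j ^ 2 * p j + X j ^ 4 * r j) :=
    Finset.sum_congr rfl fun j _ => by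
      simp only [Pi.smul_apply, mul_smul_comm, smul_add]
  rw [this, ← Finset.smul_sum, ← smul_add]

lemma isRep_single (a : MvPolynomial (Fin n) ℝ) (ha : a ∈ Q1 n) (i : Fin n) (k : ℕ)
    (hk : k = 2 ∨ k = 4) : IsRep n (a * X i ^ k) := by
  rcases hk with rfl | rfl
  · refine ⟨0, Pi.single i a, 0, Submodule.zero_mem _, ?_, fun _ => Submodule.zero_mem _, ?_⟩
    · intro j
      rcases eq_or_ne j i with rfl | h
      · simpa using ha
      · simp [Pi.single_eq_of_ne h, Submodule.zero_mem]
    · have : ∀ j : Fin n, X j ^ 2 * (Pi.single i a : Fin n → MvPolynomial (Fin n) ℝ) j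
          + X j ^ 4 * (0 : Fin n → MvPolynomial (Fin n) ℝ) j
          = if j = i then X i ^ 2 * a else 0 := by
        intro j
        rcases eq_or_ne j i with rfl | h
        · simp
        · simp [Pi.single_eq_of_ne h, h]
      rw [Finset.sum_congr rfl fun j _ => this j, Finset.sum_ite_eq' Finset.univ i]
      simp [mul_comm]
  · refine ⟨0, 0, Pi.single i a, Submodule.zero_mem _, fun _ => Submodule.zero_mem _, ?_, ?_⟩
    · intro j
      rcases eq_or_ne j i with rfl | h
      · simpa using ha
      · simp [Pi.single_eq_of_ne h, Submodule.zero_mem]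
    · have : ∀ j : Fin n, X j ^ 2 * (0 : Fin n → MvPolynomial (Fin n) ℝ) j
          + X j ^ 4 * (Pi.single i a : Fin n → MvPolynomial (Fin n) ℝ) j
          = if j = i then X i ^ 4 * a else 0 := by
        intro j
        rcases eq_or_ne j i with rfl | h
        · simp
        · simp [Pi.single_eq_of_ne h, h]
      rw [Finset.sum_congr rfl fun j _ => this j, Finset.sum_ite_eq' Finset.univ i]
      simp [mul_comm]

lemma PA_isRep {v : MvPolynomial (Fin n) ℝ} (hv : v ∈ PA n) : IsRep n v := by
  induction hv using Submodule.span_induction with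
  | zero => exact isRep_zero
  | add x y hx hy ih1 ih2 => exact isRep_add ih1 ih2
  | smul a x hx ih => exact isRep_smul a ih
  | mem x hx =>
      obtain ⟨a, ha, b, hb, rfl⟩ := hx
      induction hb using Submodule.span_induction with
      | mem y hy =>
          rcases hy with hy | ⟨i, hy | hy⟩
          · rw [Set.mem_singleton_iff] at hy
            subst hy
            exact ⟨a, 0, 0, ha, fun _ => Submodule.zero_mem _, fun _ => Submodule.zero_mem _,
              by simp⟩
          · subst hy; exact isRep_single a ha i 2 (Or.inl rfl)
          · subst hy; exact isRep_single a ha i 4 (Or.inr rfl)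
      | zero => rw [mul_zero]; exact isRep_zero
      | add y z hy hz ihy ihz => rw [mul_add]; exact isRep_add ihy ihz
      | smul c y hy ih => rw [mul_smul_comm]; exact isRep_smul c ih

end AdiniAux

/-- Unisolvency of the `n`-dimensional Adini-type element: if `v ∈ P_A` and the value,
all first partial derivatives and all pure second derivatives of `v` vanish at every
vertex of the cube `[-1,1]^n`, then `v = 0`. -/
theorem adini_unisolvent (n : ℕ) (hn : 1 ≤ n) (v : MvPolynomial (Fin n) ℝ)
    (hv : v ∈ PA n)
    (hval : ∀ a : Fin n → ℝ, (∀ i, a i = 1 ∨ a i = -1) → eval a v = 0)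
    (hder : ∀ a : Fin n → ℝ, (∀ i, a i = 1 ∨ a i = -1) →
      ∀ j : Fin n, eval a (pderiv j v) = 0)
    (hder2 : ∀ a : Fin n → ℝ, (∀ i, a i = 1 ∨ a i = -1) →
      ∀ j : Fin n, eval a (pderiv j (pderiv j v)) = 0) :
    v = 0 := by
  classical
  obtain ⟨q, p, r, hq, hp, hr, hveq⟩ := AdiniAux.PA_isRep hv
  subst hveq
  have hpow : ∀ (a : Fin n → ℝ), (∀ i, a i = 1 ∨ a i = -1) →
      ∀ i : Fin n, a i ^ 2 = 1 ∧ a i ^ 3 = a i ∧ a i ^ 4 = 1 := by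
    intro a ha i; rcases ha i with h | h <;> rw [h] <;> norm_num
  have e2 : ∀ j : Fin n, pderiv j (X j ^ 2 : MvPolynomial (Fin n) ℝ) = 2 * X j := by
    intro j; rw [pderiv_pow, pderiv_X_self]; norm_num
  have e4 : ∀ j : Fin n, pderiv j (X j ^ 4 : MvPolynomial (Fin n) ℝ) = 4 * X j ^ 3 := by
    intro j; rw [pderiv_pow, pderiv_X_self]; norm_num
  have e0 : ∀ (i j : Fin n), i ≠ j → ∀ k : ℕ,
      pderiv j (X i ^ k : MvPolynomial (Fin n) ℝ) = 0 := by
    intro i j h k; rw [pderiv_pow, pderiv_X_of_ne h, mul_zero]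
  have ee2 : ∀ j : Fin n, pderiv j (pderiv j (X j ^ 2 : MvPolynomial (Fin n) ℝ)) = 2 := by
    intro j
    rw [e2 j, pderiv_mul, pderiv_X_self, ← map_ofNat (C : ℝ →+* MvPolynomial (Fin n) ℝ) 2,
      pderiv_C]
    ring
  have ee4 : ∀ j : Fin n,
      pderiv j (pderiv j (X j ^ 4 : MvPolynomial (Fin n) ℝ)) = 12 * X j ^ 2 := by
    intro j
    rw [e4 j, pderiv_mul, ← map_ofNat (C : ℝ →+* MvPolynomial (Fin n) ℝ) 4, pderiv_C,
      pderiv_pow, pderiv_X_self]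
    rw [map_ofNat]
    push_cast
    ring
  have ddmul : ∀ (j : Fin n) (f s : MvPolynomial (Fin n) ℝ),
      pderiv j (pderiv j (f * s)) = pderiv j (pderiv j f) * s
        + 2 * (pderiv j f * pderiv j s) + f * pderiv j (pderiv j s) := by
    intro j f s
    rw [pderiv_mul, map_add, pderiv_mul, pderiv_mul]; ring
  -- Step A : the multilinear "trace" vanishes
  have hwmem : q + ∑ i : Fin n, (p i + r i) ∈ Q1 n :=
    Submodule.add_mem _ hq (Submodule.sum_mem _ fun i _ =>
      Submodule.add_mem _ (hp i) (hr i))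
  have hw : q + ∑ i : Fin n, (p i + r i) = 0 := by
    apply AdiniAux.ml_vanish _ (AdiniAux.mem_Q1_coeff hwmem)
    intro a ha
    have hv0 := hval a ha
    rw [map_add, map_sum] at hv0 ⊢
    have hterm : ∀ i : Fin n, eval a (p i + r i)
        = eval a (X i ^ 2 * p i + X i ^ 4 * r i) := by
      intro i
      rw [map_add, map_add, map_mul, map_mul, map_pow, map_pow, eval_X,
        (hpow a ha i).1, (hpow a ha i).2.2, one_mul, one_mul]
    rw [Finset.sum_congr rfl fun i _ => hterm i]
    exact hv0
  -- first derivative, term by term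
  have term1 : ∀ (a : Fin n → ℝ), (∀ i, a i = 1 ∨ a i = -1) → ∀ (j i : Fin n),
      eval a (pderiv j (X i ^ 2 * p i + X i ^ 4 * r i))
        = (eval a (pderiv j (p i)) + eval a (pderiv j (r i)))
          + (if i = j then a j * (2 * eval a (p i) + 4 * eval a (r i)) else 0) := by
    intro a ha j i
    obtain ⟨h2, h3, h4⟩ := hpow a ha i
    rcases eq_or_ne i j with rfl | hne
    · rw [if_pos rfl, map_add, pderiv_mul, pderiv_mul, e2 i, e4 i]
      simp only [map_add, map_mul, map_pow, eval_X, map_ofNat]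
      simp only [h2, h3, h4]
      ring
    · rw [if_neg hne, map_add, pderiv_mul, pderiv_mul, e0 i j hne 2, e0 i j hne 4,
        zero_mul, zero_mul, zero_add, zero_add]
      simp only [map_add, map_mul, map_pow, eval_X]
      simp only [h2, h4]
      ring
  -- second derivative, term by term
  have term2 : ∀ (a : Fin n → ℝ), (∀ i, a i = 1 ∨ a i = -1) → ∀ (j i : Fin n),
      eval a (pderiv j (pderiv j (X i ^ 2 * p i + X i ^ 4 * r i)))
        = if i = j then 2 * eval a (p i) + 12 * eval a (r i)
            + a j * (4 * eval a (pderiv j (p i)) + 8 * eval a (pderiv j (r i))) else 0 := by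
    intro a ha j i
    obtain ⟨h2, h3, h4⟩ := hpow a ha i
    rw [map_add, map_add, ddmul j _ (p i), ddmul j _ (r i),
      AdiniAux.Q1_pderiv_pderiv j (hp i), AdiniAux.Q1_pderiv_pderiv j (hr i),
      mul_zero, mul_zero, add_zero, add_zero]
    rcases eq_or_ne i j with rfl | hne
    · rw [if_pos rfl, ee2 i, ee4 i, e2 i, e4 i]
      simp only [map_add, map_mul, map_pow, eval_X, map_ofNat]
      simp only [h2, h3, h4]
      ring
    · rw [if_neg hne, e0 i j hne 2, e0 i j hne 4, map_zero]
      simp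
  -- vanishing of 2 p j + 4 r j
  have hg : ∀ j : Fin n, (2 : MvPolynomial (Fin n) ℝ) * p j + 4 * r j = 0 := by
    intro j
    have hmem : (2 : MvPolynomial (Fin n) ℝ) * p j + 4 * r j ∈ Q1 n := by
      apply Submodule.add_mem
      · rw [← map_ofNat (C : ℝ →+* MvPolynomial (Fin n) ℝ) 2, ← smul_eq_C_mul]
        exact Submodule.smul_mem _ _ (hp j)
      · rw [← map_ofNat (C : ℝ →+* MvPolynomial (Fin n) ℝ) 4, ← smul_eq_C_mul]
        exact Submodule.smul_mem _ _ (hr j)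
    apply AdiniAux.ml_vanish _ (AdiniAux.mem_Q1_coeff hmem)
    intro a ha
    -- the derivative of the vanishing multilinear part
    have h1 : pderiv j (q + ∑ i : Fin n, (p i + r i)) = 0 := by rw [hw, map_zero]
    rw [map_add, map_sum] at h1
    have hB := congrArg (eval a) h1
    rw [map_zero, map_add, map_sum] at hB
    have hsplit : ∀ i : Fin n, eval a (pderiv j (p i + r i))
        = eval a (pderiv j (p i)) + eval a (pderiv j (r i)) := fun i => by
      rw [map_add, map_add]
    rw [Finset.sum_congr rfl fun i _ => hsplit i] at hB
    -- expand the full first derivative at the vertex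
    have hDv := hder a ha j
    rw [map_add, map_add, map_sum, map_sum] at hDv
    rw [Finset.sum_congr rfl fun i _ => term1 a ha j i, Finset.sum_add_distrib,
      Finset.sum_ite_eq' Finset.univ j, if_pos (Finset.mem_univ j)] at hDv
    have hz : a j * (2 * eval a (p j) + 4 * eval a (r j)) = 0 := by linarith
    have hfin : 2 * eval a (p j) + 4 * eval a (r j) = 0 := by
      rcases ha j with h | h <;> rw [h] at hz <;> linarith
    simp only [map_add, map_mul, map_ofNat]
    linarith
  -- vanishing of the second-derivative combination
  have hh : ∀ j : Fin n, (2 : MvPolynomial (Fin n) ℝ) * p j + 12 * r j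
      + 4 * (X j * pderiv j (p j)) + 8 * (X j * pderiv j (r j)) = 0 := by
    intro j
    have hmem : (2 : MvPolynomial (Fin n) ℝ) * p j + 12 * r j
        + 4 * (X j * pderiv j (p j)) + 8 * (X j * pderiv j (r j)) ∈ Q1 n := by
      apply Submodule.add_mem
      apply Submodule.add_mem
      apply Submodule.add_mem
      · rw [← map_ofNat (C : ℝ →+* MvPolynomial (Fin n) ℝ) 2, ← smul_eq_C_mul]
        exact Submodule.smul_mem _ _ (hp j)
      · rw [← map_ofNat (C : ℝ →+* MvPolynomial (Fin n) ℝ) 12, ← smul_eq_C_mul]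
        exact Submodule.smul_mem _ _ (hr j)
      · rw [← map_ofNat (C : ℝ →+* MvPolynomial (Fin n) ℝ) 4, ← smul_eq_C_mul]
        exact Submodule.smul_mem _ _ (AdiniAux.Q1_X_mul_pderiv j (hp j))
      · rw [← map_ofNat (C : ℝ →+* MvPolynomial (Fin n) ℝ) 8, ← smul_eq_C_mul]
        exact Submodule.smul_mem _ _ (AdiniAux.Q1_X_mul_pderiv j (hr j))
    apply AdiniAux.ml_vanish _ (AdiniAux.mem_Q1_coeff hmem)
    intro a ha
    have hD2 := hder2 a ha j
    rw [map_add, map_add, map_add, map_sum, map_sum, map_sum,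
      AdiniAux.Q1_pderiv_pderiv j hq, map_zero, zero_add] at hD2
    rw [Finset.sum_congr rfl fun i _ => term2 a ha j i,
      Finset.sum_ite_eq' Finset.univ j, if_pos (Finset.mem_univ j)] at hD2
    simp only [map_add, map_mul, map_ofNat, eval_X]
    linear_combination hD2
  -- extract p j = 0 and r j = 0
  have hr0 : ∀ j : Fin n, r j = 0 := by
    intro j
    have hgj := hg j
    have hhj := hh j
    have hp' : p j = -2 * r j := by
      apply mul_left_cancel₀ (two_ne_zero (α := MvPolynomial (Fin n) ℝ))
      linear_combination hgj
    have hd' : pderiv j (p j) = -2 * pderiv j (r j) := by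
      rw [hp', show ((-2 : MvPolynomial (Fin n) ℝ)) = C (-2 : ℝ) by
        rw [map_neg, map_ofNat], pderiv_C_mul]
    rw [hd', hp'] at hhj
    have h8 : (8 : MvPolynomial (Fin n) ℝ) * r j = 0 := by linear_combination hhj
    have h8' : C (8 : ℝ) * r j = 0 := by rwa [map_ofNat]
    calc r j = C (8⁻¹ : ℝ) * (C (8 : ℝ) * r j) := by
          rw [← mul_assoc, ← map_mul, show (8⁻¹ * 8 : ℝ) = 1 by norm_num, map_one, one_mul]
      _ = 0 := by rw [h8', mul_zero]
  have hp0 : ∀ j : Fin n, p j = 0 := by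
    intro j
    have hgj := hg j
    rw [hr0 j, mul_zero, add_zero] at hgj
    have h2' : C (2 : ℝ) * p j = 0 := by rwa [map_ofNat]
    calc p j = C (2⁻¹ : ℝ) * (C (2 : ℝ) * p j) := by
          rw [← mul_assoc, ← map_mul, show (2⁻¹ * 2 : ℝ) = 1 by norm_num, map_one, one_mul]
      _ = 0 := by rw [h2', mul_zero]
  have hq0 : q = 0 := by
    have hsum0 : (∑ i : Fin n, (p i + r i)) = 0 :=
      Finset.sum_eq_zero fun i _ => by rw [hp0 i, hr0 i, add_zero]
    rwa [hsum0, add_zero] at hw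
  rw [hq0, zero_add]
  exact Finset.sum_eq_zero fun i _ => by
    rw [hp0 i, hr0 i, mul_zero, mul_zero, add_zero]
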